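/- For every integer k ≥ 1, the sequence b defined by b(0)=4, b(1)=16k+1, and b(n)=4k·b(n-1)+k·b(n-2) for n≥2 satisfies b(n)=floor(b(n-1)^2/b(n-2)+1/2) for all n≥2. -/

import Mathlib

theorem stmt_10 (k : ℤ) (hk : 1 ≤ k) (b : ℕ → ℤ)
    (h0 : b 0 = 4) (h1 : b 1 = 16*k+1)
    (hrec : ∀ n, 2 ≤ n → b n = 4*k * b (n-1) + k * b (n-2)) :
    ∀ n, 2 ≤ n → b n = ⌊((b (n-1) : ℚ)^2 / (b (n-2) : ℚ)) + 1/2⌋ := by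
  have hk0 : (0:ℤ) < k := by linarith
  -- growth lemma
  have hgrow : ∀ m, 2 * k ^ m < b m := by
    intro m
    induction m using Nat.strong_induction_on with
    | _ m ih =>
      match m with
      | 0 => simp [h0]
      | 1 =>
        simp only [h1, pow_one]
        linarith
      | (m+2) =>
        have ih1 := ih m (by omega)
        have ih2 := ih (m+1) (by omega)
        have hr := hrec (m+2) (by omega)
        simp only [Nat.add_sub_cancel] at hr
        have hr' : b (m+2) = 4*k * b (m+1) + k * b m := by
          simpa only [show m+2-1 = m+1 by omega, show m+2-2 = m by omega] using hr
        have hp : (0:ℤ) < k ^ m := pow_pos hk0 m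
        have e2 : k ^ (m+2) = k ^ m * k * k := by ring
        have e1 : k ^ (m+1) = k ^ m * k := by ring
        have t1 : 4*k*(2*k^(m+1)) < 4*k*b (m+1) :=
          mul_lt_mul_of_pos_left ih2 (by linarith)
        have t2 : k*(2*k^m) < k*b m := mul_lt_mul_of_pos_left ih1 hk0
        rw [hr', e2]
        nlinarith [t1, t2, hp, hk0, e1, mul_pos (mul_pos hp hk0) hk0]
  -- determinant lemma
  have hdet : ∀ m, b (m+2) * b m - b (m+1) ^ 2 = (-1) ^ (m+1) * k ^ m := by
    intro m
    induction m with
    | zero =>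
      have hr := hrec 2 (by omega)
      norm_num at hr ⊢
      rw [hr, h0, h1]
      ring
    | succ m ih =>
      have hr2 : b (m+2) = 4*k * b (m+1) + k * b m := by
        have hr := hrec (m+2) (by omega)
        simpa only [show m+2-1 = m+1 by omega, show m+2-2 = m by omega] using hr
      have hr3 : b (m+3) = 4*k * b (m+2) + k * b (m+1) := by
        have hr := hrec (m+3) (by omega)
        simpa only [show m+3-1 = m+2 by omega, show m+3-2 = m+1 by omega] using hr
      have : b (m+1+2) * b (m+1) - b (m+1+1) ^ 2
          = -k * (b (m+2) * b m - b (m+1) ^ 2) := by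
        show b (m+3) * b (m+1) - b (m+2) ^ 2 = _
        rw [hr3, hr2]; ring
      rw [this, ih]; ring
  intro n hn
  obtain ⟨m, rfl⟩ : ∃ m, n = m + 2 := ⟨n - 2, by omega⟩
  have e1 : m + 2 - 1 = m + 1 := by omega
  have e2 : m + 2 - 2 = m := by omega
  rw [e1, e2]
  have hbm : (0:ℤ) < b m := lt_trans (by positivity) (hgrow m)
  have hbmQ : (0:ℚ) < (b m : ℚ) := by exact_mod_cast hbm
  have hd := hdet m
  have hsq : ((b (m+1) : ℚ))^2 = (b (m+2) : ℚ) * (b m : ℚ) + (-1)^m * (k:ℚ)^m := by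
    have : (b (m+1))^2 = b (m+2) * b m + (-1)^m * k^m := by
      have : ((-1:ℤ))^(m+1) = -((-1)^m) := by ring
      rw [this] at hd; linarith
    exact_mod_cast congrArg (Int.cast : ℤ → ℚ) this
  have hdiv : ((b (m+1) : ℚ))^2 / (b m : ℚ)
      = (b (m+2) : ℚ) + ((-1:ℚ))^m * (k:ℚ)^m / (b m : ℚ) := by
    field_simp [hsq]
    linear_combination hsq
  rw [hdiv]
  have hkmQ : (0:ℚ) < (k:ℚ)^m := by positivity
  have hlt : 2 * (k:ℚ)^m < (b m : ℚ) := by exact_mod_cast hgrow m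
  have hfrac : (k:ℚ)^m / (b m : ℚ) < 1/2 := by
    rw [div_lt_iff₀ hbmQ]; linarith
  have hfracpos : 0 < (k:ℚ)^m / (b m : ℚ) := by positivity
  have hbound : |((-1:ℚ))^m * (k:ℚ)^m / (b m : ℚ)| < 1/2 := by
    rw [abs_div, abs_mul, abs_pow, abs_neg, abs_one, one_pow, one_mul,
      abs_of_pos hkmQ, abs_of_pos hbmQ]
    exact hfrac
  obtain ⟨hlo, hhi⟩ := abs_lt.mp hbound
  symm
  rw [Int.floor_eq_iff]
  constructor
  · push_cast; linarith
  · push_cast; linarith
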